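/- The perfect matching graph on 2n vertices (n disjoint edges) admits a disjointness labelling with a universe of size O(log n): specifically, if k is such that C(k, ⌊k/2⌋) ≥ 2n and the labels are distinct ⌊k/2⌋-element subsets of a k-element set paired with their complements (for even k), then adjacency coincides with disjointness. -/

import Mathlib

/-- A disjointness labelling of `G`: an injective assignment of nonempty
finite subsets of the universe `U` to vertices, such that two distinct
vertices are adjacent iff their labels are disjoint. -/
def IsDisjLabelling {V U : Type*} (G : SimpleGraph V) (ℓ : V → Finset U) : Prop :=
  Function.Injective ℓ ∧ (∀ v, (ℓ v).Nonempty) ∧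
    ∀ u v : V, u ≠ v → (G.Adj u v ↔ Disjoint (ℓ u) (ℓ v))

/-- The universe size number: the minimum size of a universe admitting a
disjointness labelling of `G`. -/
noncomputable def USN {V : Type*} (G : SimpleGraph V) : ℕ :=
  sInf {m : ℕ | ∃ ℓ : V → Finset (Fin m), IsDisjLabelling G ℓ}

/-- The perfect matching on `2 * n` vertices: `(i, b)` is adjacent to `(j, c)`
iff `i = j` and `b ≠ c`. -/
def matchingGraph (n : ℕ) : SimpleGraph (Fin n × Bool) :=
  SimpleGraph.fromRel (fun p q => p.1 = q.1)


lemma cardComplHalf {k : ℕ} (hk : Even k) (A : Finset (Fin k)) (hA : A.card = k / 2) :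
    Aᶜ.card = k / 2 := by
  rw [Finset.card_compl, Fintype.card_fin, hA]
  obtain ⟨m, rfl⟩ := hk; omega

lemma disjIffCompl {k : ℕ} (hk : Even k) {A B : Finset (Fin k)} (hA : A.card = k / 2)
    (hB : B.card = k / 2) : Disjoint A B ↔ B = Aᶜ := by
  constructor
  · intro hd
    refine Finset.eq_of_subset_of_card_le (le_compl_iff_disjoint_left.mpr hd) ?_
    rw [cardComplHalf hk A hA, hB]
  · rintro rfl; exact disjoint_compl_right

/-- If `k` is even and `C(k, k/2) ≥ 2n`, the perfect matching on `2n` vertices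
admits a disjointness labelling by `k/2`-element subsets of a `k`-element
universe, where matched partners receive complementary sets. -/

theorem stmt9 (n k : ℕ) (hk : Even k) (h : 2 * n ≤ k.choose (k / 2)) :
    ∃ ℓ : Fin n × Bool → Finset (Fin k),
      IsDisjLabelling (matchingGraph n) ℓ ∧ (∀ p, (ℓ p).card = k / 2) ∧
        ∀ p : Fin n × Bool, ℓ (p.1, !p.2) = (ℓ p)ᶜ := by
  rcases Nat.eq_zero_or_pos n with rfl | hn
  · exact ⟨fun p => p.1.elim0, ⟨fun p => p.1.elim0, fun p => p.1.elim0,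
      fun u => u.1.elim0⟩, fun p => p.1.elim0, fun p => p.1.elim0⟩
  have hk2 : 2 ≤ k := by
    by_contra hlt
    interval_cases k
    · simp at h; omega
    · exact (Nat.not_even_iff.mpr rfl) hk
  have hhalf : 1 ≤ k / 2 := by omega
  -- the family of half-size sets whose colex is below that of their complement
  set T : Finset (Finset (Fin k)) := Finset.univ.powersetCard (k / 2) with hT
  have hmemT : ∀ A : Finset (Fin k), A ∈ T ↔ A.card = k / 2 := by
    intro A; simp [hT, Finset.mem_powersetCard]
  have hne : ∀ A : Finset (Fin k), A.card = k / 2 → A ≠ Aᶜ := by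
    intro A hA hAc
    have : A = ∅ := disjoint_self.mp (by nth_rewrite 2 [hAc]; exact disjoint_compl_right)
    rw [this] at hA; simp at hA; omega
  set P : Finset (Fin k) → Prop :=
    fun A => toColex A < toColex Aᶜ with hP
  set T' : Finset (Finset (Fin k)) := T.filter P with hT'
  have hcards : (T.filter P).card = (T.filter fun A => ¬ P A).card := by
    apply Finset.card_bij (fun A _ => Aᶜ)
    · intro A hA
      rw [Finset.mem_filter] at hA ⊢
      rw [hmemT] at hA
      refine ⟨(hmemT _).mpr (cardComplHalf hk A hA.1), ?_⟩
      simp only [hP, compl_compl, not_lt]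
      exact le_of_lt hA.2
    · intro A _ B _ hAB
      exact compl_injective hAB
    · intro B hB
      rw [Finset.mem_filter, hmemT] at hB
      refine ⟨Bᶜ, ?_, compl_compl B⟩
      rw [Finset.mem_filter, hmemT]
      refine ⟨cardComplHalf hk B hB.1, ?_⟩
      simp only [hP, compl_compl]
      rcases lt_or_gt_of_ne (fun hEq => hne B hB.1 (toColex_inj.mp hEq)) with h1 | h1
      · exact absurd h1 hB.2
      · exact h1
  have hTcard : T.card = k.choose (k / 2) := by
    rw [hT, Finset.card_powersetCard, Finset.card_univ, Fintype.card_fin]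
  have hsplit := Finset.card_filter_add_card_filter_not (s := T) (p := P)
  have hnle : n ≤ T'.card := by rw [hT']; omega
  -- the chosen representatives
  set S : Fin n → Finset (Fin k) :=
    fun i => (T'.equivFin.symm (Fin.castLE hnle i)).1 with hS
  have hSmem : ∀ i, S i ∈ T' := fun i => (T'.equivFin.symm (Fin.castLE hnle i)).2
  have hScard : ∀ i, (S i).card = k / 2 := by
    intro i
    have := hSmem i
    rw [hT', Finset.mem_filter, hmemT] at this
    exact this.1
  have hSlt : ∀ i, toColex (S i) < toColex (S i)ᶜ := by
    intro i
    have := hSmem i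
    rw [hT', Finset.mem_filter] at this
    exact this.2
  have hSinj : Function.Injective S := by
    intro i j hij
    have := T'.equivFin.symm.injective (Subtype.ext hij)
    exact Fin.castLE_injective hnle this
  have hSnc : ∀ i j, S i ≠ (S j)ᶜ := by
    intro i j hEq
    have h1 := hSlt i
    have h2 := hSlt j
    rw [hEq, compl_compl] at h1
    exact absurd (h1.trans h2) (lt_irrefl _)
  refine ⟨fun p => if p.2 then (S p.1)ᶜ else S p.1, ⟨?_, ?_, ?_⟩, ?_, ?_⟩
  · -- injective
    rintro ⟨i, bi⟩ ⟨j, bj⟩ hij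
    simp only at hij
    cases bi <;> cases bj <;> simp only [if_true, if_false, Bool.false_eq_true] at hij
    · simp [hSinj hij]
    · exact absurd hij (hSnc i j)
    · exact absurd hij.symm (hSnc j i)
    · simp [hSinj (compl_injective hij)]
  · -- nonempty
    rintro ⟨i, b⟩
    cases b <;> simp only [if_true, if_false, Bool.false_eq_true]
    · rw [← Finset.card_pos, hScard]; omega
    · rw [← Finset.card_pos, cardComplHalf hk _ (hScard i)]; omega
  · -- adjacency iff disjoint
    rintro ⟨i, bi⟩ ⟨j, bj⟩ huv
    have hadj : (matchingGraph n).Adj (i, bi) (j, bj) ↔ i = j := by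
      rw [matchingGraph, SimpleGraph.fromRel_adj]
      simp only [ne_eq, huv, not_false_iff, true_and]
      tauto
    rw [hadj]
    cases bi <;> cases bj <;> simp only [if_true, if_false, Bool.false_eq_true]
    · rw [disjIffCompl hk (hScard i) (hScard j)]
      constructor
      · rintro rfl; exact absurd rfl huv
      · intro hEq; exact absurd hEq (hSnc j i)
    · rw [disjIffCompl hk (hScard i) (cardComplHalf hk _ (hScard j))]
      constructor
      · rintro rfl; rfl
      · intro hEq; exact hSinj (compl_injective hEq).symm
    · rw [disjIffCompl hk (cardComplHalf hk _ (hScard i)) (hScard j)]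
      constructor
      · rintro rfl; simp
      · intro hEq
        rw [compl_compl] at hEq
        exact hSinj hEq.symm
    · rw [disjIffCompl hk (cardComplHalf hk _ (hScard i)) (cardComplHalf hk _ (hScard j))]
      constructor
      · rintro rfl; exact absurd rfl huv
      · intro hEq
        rw [compl_compl] at hEq
        exact absurd hEq.symm (hSnc i j)
  · -- cards
    rintro ⟨i, b⟩
    cases b <;> simp only [if_true, if_false, Bool.false_eq_true]
    · exact hScard i
    · exact cardComplHalf hk _ (hScard i)
  · -- complement partners
    rintro ⟨i, b⟩
    cases b <;> simp
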